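/- Let g : ℝ^d → ℝ be continuously differentiable with ‖∇g(y)‖ ≤ 46·√(r+1) for every y ∈ ℝ^d. Let x ∈ ℝ^d and set y = ρ(x). If there exists a unit vector u ∈ ℝ^d with |⟨u, y⟩| < 1 and |⟨u, ∇g(y)⟩| ≥ 1/√2, then the function F : ℝ^d → ℝ defined by F(z) = g(ρ(z)) + ‖z‖²/5 satisfies ‖∇F(x)‖ ≥ 0.08. -/

import Mathlib

open scoped RealInnerProductSpace

/-- The smoothing map `ρ(x) = x / √(1 + ‖x‖²/R²)`. -/
noncomputable def rho {d : ℕ} (R : ℝ) (x : EuclideanSpace ℝ (Fin d)) :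
    EuclideanSpace ℝ (Fin d) :=
  (1 / Real.sqrt (1 + ‖x‖^2 / R^2)) • x

set_option maxHeartbeats 1000000 in
lemma rho_grad {d : ℕ} (R : ℝ) (hR : 0 < R) (g : EuclideanSpace ℝ (Fin d) → ℝ)
    (hg : ContDiff ℝ 1 g) (x : EuclideanSpace ℝ (Fin d)) :
    HasGradientAt (fun z => g (rho R z) + ‖z‖^2 / 5)
      ((Real.sqrt (1 + ‖x‖^2 / R^2))⁻¹ • gradient g (rho R x) +
        (2/5 + (-(R^2 * Real.sqrt (1 + ‖x‖^2 / R^2)^3)⁻¹) *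
          ⟪gradient g (rho R x), x⟫) • x) x := by
  have hrho_eq : (rho R : EuclideanSpace ℝ (Fin d) → EuclideanSpace ℝ (Fin d))
      = fun z => (Real.sqrt (1 + ‖z‖^2 / R^2))⁻¹ • z := by
    funext z; simp [rho, one_div]
  have ht0 : (0:ℝ) < 1 + ‖x‖^2 / R^2 := by positivity
  have hsq : Real.sqrt (1 + ‖x‖^2 / R^2) ^ 2 = 1 + ‖x‖^2 / R^2 := Real.sq_sqrt ht0.le
  have hspos : 0 < Real.sqrt (1 + ‖x‖^2 / R^2) := Real.sqrt_pos.mpr ht0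
  have hq : HasFDerivAt (fun z : EuclideanSpace ℝ (Fin d) => 1 + ‖z‖^2 / R^2)
      ((R^2)⁻¹ • (2 • (innerSL ℝ x))) x := by
    have h := ((hasFDerivAt_id x).norm_sq).const_mul ((R^2)⁻¹)
    have h2 := h.const_add 1
    have heq : (fun z : EuclideanSpace ℝ (Fin d) => 1 + (R^2)⁻¹ * ‖id z‖^2)
        = fun z : EuclideanSpace ℝ (Fin d) => 1 + ‖z‖^2 / R^2 := by
      funext z; simp [div_eq_inv_mul]
    rw [heq] at h2
    exact h2
  have houter : HasDerivAt (fun t : ℝ => (Real.sqrt t)⁻¹)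
      (-(1 / (2 * Real.sqrt (1 + ‖x‖^2 / R^2))) / (Real.sqrt (1 + ‖x‖^2 / R^2))^2)
      (1 + ‖x‖^2 / R^2) :=
    (Real.hasDerivAt_sqrt ht0.ne').inv hspos.ne'
  have hφ : HasFDerivAt (fun z : EuclideanSpace ℝ (Fin d) => (Real.sqrt (1 + ‖z‖^2 / R^2))⁻¹)
      ((-(1 / (2 * Real.sqrt (1 + ‖x‖^2 / R^2))) / (Real.sqrt (1 + ‖x‖^2 / R^2))^2)
        • ((R^2)⁻¹ • (2 • (innerSL ℝ x)))) x :=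
    HasDerivAt.comp_hasFDerivAt (h₂ := fun t : ℝ => (Real.sqrt t)⁻¹) x houter hq
  have hrho : HasFDerivAt (rho R)
      ((Real.sqrt (1 + ‖x‖^2 / R^2))⁻¹ • (ContinuousLinearMap.id ℝ (EuclideanSpace ℝ (Fin d))) +
       ((-(1 / (2 * Real.sqrt (1 + ‖x‖^2 / R^2))) / (Real.sqrt (1 + ‖x‖^2 / R^2))^2)
        • ((R^2)⁻¹ • (2 • (innerSL ℝ x)))).smulRight x) x := by
    rw [hrho_eq]
    exact hφ.smul (hasFDerivAt_id x)
  have hgd : DifferentiableAt ℝ g (rho R x) := (hg.differentiable one_ne_zero).differentiableAt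
  have hgf : HasFDerivAt g
      ((InnerProductSpace.toDual ℝ (EuclideanSpace ℝ (Fin d))) (gradient g (rho R x)))
      (rho R x) := hgd.hasGradientAt.hasFDerivAt
  have hns : HasFDerivAt (fun z : EuclideanSpace ℝ (Fin d) => ‖z‖^2 / 5)
      ((5:ℝ)⁻¹ • (2 • ((innerSL ℝ x).comp (ContinuousLinearMap.id ℝ (EuclideanSpace ℝ (Fin d)))))) x := by
    have h := ((hasFDerivAt_id x).norm_sq).const_mul ((5:ℝ)⁻¹)
    have heq : (fun z : EuclideanSpace ℝ (Fin d) => (5:ℝ)⁻¹ * ‖id z‖^2)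
        = fun z : EuclideanSpace ℝ (Fin d) => ‖z‖^2 / 5 := by
      funext z; simp [div_eq_inv_mul]
    rw [heq] at h
    exact h
  have htot := (hgf.comp x hrho).add hns
  rw [hasGradientAt_iff_hasFDerivAt]
  refine HasFDerivAt.congr_fderiv htot ?_
  ext h'
  set s := Real.sqrt (1 + ‖x‖^2 / R^2) with hs_def
  simp only [ContinuousLinearMap.add_apply, ContinuousLinearMap.comp_apply,
    ContinuousLinearMap.smul_apply, ContinuousLinearMap.smulRight_apply,
    ContinuousLinearMap.coe_smul', Pi.smul_apply, ContinuousLinearMap.id_apply,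
    ContinuousLinearMap.coe_id', id_eq, innerSL_apply_apply, InnerProductSpace.toDual_apply_apply,
    inner_add_left, inner_add_right, real_inner_smul_left, real_inner_smul_right,
    smul_eq_mul]
  field_simp
  ring


set_option maxHeartbeats 2000000 in
lemma main_ineq {d : ℕ} (x u w : EuclideanSpace ℝ (Fin d)) (R s : ℝ)
    (hR230 : 230 ≤ R) (hspos : 0 < s)
    (hsq : s^2 = 1 + ‖x‖^2 / R^2)
    (hwnorm : ‖w‖ ≤ R / 5) (hu : ‖u‖ = 1)
    (hux : |⟪u, x⟫| ≤ s)
    (huw : 1 / Real.sqrt 2 ≤ |⟪u, w⟫|) :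
    0.08 ≤ ‖s⁻¹ • w + (2/5 + (-(R^2 * s^3)⁻¹) * ⟪w, x⟫) • x‖ := by
  have hRpos : (0:ℝ) < R := by linarith
  obtain ⟨v, hv_def⟩ : ∃ v : EuclideanSpace ℝ (Fin d),
      v = s⁻¹ • w + (2/5 + (-(R^2 * s^3)⁻¹) * ⟪w, x⟫) • x := ⟨_, rfl⟩
  rw [← hv_def]
  obtain ⟨n, hn⟩ : ∃ n : ℝ, n = ‖x‖ := ⟨‖x‖, rfl⟩
  obtain ⟨p, hp⟩ : ∃ p : ℝ, p = ⟪x, w⟫ := ⟨_, rfl⟩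
  obtain ⟨α, hα⟩ : ∃ q : ℝ, q = ⟪u, w⟫ := ⟨_, rfl⟩
  obtain ⟨β, hβ⟩ : ∃ q : ℝ, q = ⟪u, x⟫ := ⟨_, rfl⟩
  obtain ⟨γ, hγ⟩ : ∃ q : ℝ, q = ⟪u, v⟫ := ⟨_, rfl⟩
  obtain ⟨X, hX⟩ : ∃ q : ℝ, q = ⟪x, v⟫ := ⟨_, rfl⟩
  obtain ⟨N, hN⟩ : ∃ q : ℝ, q = ‖v‖ := ⟨_, rfl⟩
  rw [← hn] at hsq
  rw [← hβ] at hux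
  rw [← hα] at huw
  rw [← hN]
  have hn0 : 0 ≤ n := hn ▸ norm_nonneg x
  have hN0 : 0 ≤ N := hN ▸ norm_nonneg v
  have hxw : |p| ≤ n * (R/5) := by
    rw [hp]
    calc |⟪x, w⟫| ≤ ‖x‖ * ‖w‖ := abs_real_inner_le_norm x w
      _ ≤ n * (R/5) := by rw [← hn]; exact mul_le_mul le_rfl hwnorm (norm_nonneg w) hn0
  have hgN : |γ| ≤ N := by
    rw [hγ, hN]
    have := abs_real_inner_le_norm u v
    rwa [hu, one_mul] at this
  have hXN : X ≤ n * N := by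
    rw [hX, hn, hN]; exact real_inner_le_norm x v
  have hiv : γ = s⁻¹ * α + (2/5 + (-(R^2 * s^3)⁻¹) * p) * β := by
    rw [hγ, hα, hβ, hp, hv_def, inner_add_right, real_inner_smul_right,
      real_inner_smul_right, real_inner_comm w x]
  have hxv : X = p * s⁻¹ + (2/5 + (-(R^2 * s^3)⁻¹) * p) * n^2 := by
    rw [hX, hp, hv_def, inner_add_right, real_inner_smul_right, real_inner_smul_right,
      real_inner_comm w x, real_inner_self_eq_norm_sq, ← hn]
    ring
  clear! x u w v
  -- now purely scalar
  have hs1 : (1:ℝ) ≤ s := by nlinarith [div_nonneg (sq_nonneg n) (sq_nonneg R)]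
  have hn2 : s^2 * R^2 = R^2 + n^2 := by rw [hsq]; field_simp
  by_cases hc : n ≤ 0.42 * R
  · -- small case
    have hnn : n^2 ≤ 0.1764 * R^2 := by nlinarith [mul_self_le_mul_self hn0 hc]
    have hss : s^2 ≤ 1.1764 := by nlinarith [mul_pos hRpos hRpos]
    have hsle : s ≤ 1.085 := by nlinarith
    have hsqrt2 : Real.sqrt 2 ≤ 1.4143 := by
      rw [show (1.4143:ℝ) = Real.sqrt (1.4143^2) from (Real.sqrt_sq (by norm_num)).symm]
      exact Real.sqrt_le_sqrt (by norm_num)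
    have hsqrt2pos : (0:ℝ) < Real.sqrt 2 := Real.sqrt_pos.mpr (by norm_num)
    have hb_abs : |2/5 + (-(R^2 * s^3)⁻¹) * p| ≤ 0.484 := by
      have hinv : (R^2 * s^3)⁻¹ ≤ (R^2)⁻¹ := by
        apply inv_anti₀ (by positivity)
        nlinarith
      have h3 : |(-(R^2 * s^3)⁻¹) * p| ≤ (R^2)⁻¹ * (0.42 * R * (R/5)) := by
        rw [abs_mul, abs_neg, abs_of_pos (by positivity : (0:ℝ) < (R^2 * s^3)⁻¹)]
        apply mul_le_mul hinv _ (abs_nonneg _) (by positivity)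
        calc |p| ≤ n * (R/5) := hxw
          _ ≤ 0.42 * R * (R/5) := mul_le_mul_of_nonneg_right hc (by positivity)
      have h4 : (R^2)⁻¹ * (0.42 * R * (R/5)) = 0.084 := by field_simp; ring
      rw [h4] at h3
      calc |2/5 + (-(R^2 * s^3)⁻¹) * p|
          ≤ |(2/5:ℝ)| + |(-(R^2 * s^3)⁻¹) * p| := abs_add_le _ _
        _ ≤ 0.4 + 0.084 := by rw [abs_of_pos (by norm_num : (0:ℝ) < 2/5)]; linarith
        _ ≤ 0.484 := by norm_num
    have hA : (0.651:ℝ) ≤ |s⁻¹ * α| := by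
      rw [abs_mul, abs_of_pos (by positivity : (0:ℝ) < s⁻¹)]
      have h5 : s * Real.sqrt 2 ≤ 1.5346 := by nlinarith
      have h6 : (0.651:ℝ) ≤ s⁻¹ * (1 / Real.sqrt 2) := by
        rw [show s⁻¹ * (1 / Real.sqrt 2) = (s * Real.sqrt 2)⁻¹ by rw [mul_inv]; ring]
        calc (0.651:ℝ) ≤ (1.5346)⁻¹ := by norm_num
          _ ≤ (s * Real.sqrt 2)⁻¹ := inv_anti₀ (by positivity) h5
      calc (0.651:ℝ) ≤ s⁻¹ * (1 / Real.sqrt 2) := h6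
        _ ≤ s⁻¹ * |α| := mul_le_mul le_rfl huw (by positivity) (by positivity)
    have hB : |(2/5 + (-(R^2 * s^3)⁻¹) * p) * β| ≤ 0.484 * 1.085 := by
      rw [abs_mul]
      exact mul_le_mul hb_abs (le_trans hux hsle) (abs_nonneg _) (by norm_num)
    have hlow : 0.651 - 0.484 * 1.085 ≤ |γ| := by
      rw [hiv]
      have h7 := abs_add_le (s⁻¹ * α + (2/5 + (-(R^2 * s^3)⁻¹) * p) * β)
        (-((2/5 + (-(R^2 * s^3)⁻¹) * p) * β))
      rw [add_neg_cancel_right, abs_neg] at h7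
      linarith
    calc (0.08:ℝ) ≤ 0.651 - 0.484 * 1.085 := by norm_num
      _ ≤ |γ| := hlow
      _ ≤ N := hgN
  · -- large case
    push_neg at hc
    have hnpos : (0:ℝ) < n := by linarith
    have hkey : s⁻¹ + (-(R^2*s^3)⁻¹) * n^2 = (s^3)⁻¹ := by
      have hne : s ≠ 0 := hspos.ne'
      have hne2 : R ≠ 0 := hRpos.ne'
      field_simp
      linear_combination hn2
    have hxv2 : X = p * (s^3)⁻¹ + (2/5) * n^2 := by
      rw [hxv]; rw [← hkey]; ring
    have hss : (1.1764:ℝ) ≤ s^2 := by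
      nlinarith [mul_self_le_mul_self (by linarith : (0:ℝ) ≤ 0.42 * R) hc.le,
        mul_pos hRpos hRpos]
    have hs108 : (1.08:ℝ) ≤ s := by nlinarith
    have hs3 : (1.27:ℝ) ≤ s^3 := by nlinarith
    have hinv3 : (s^3)⁻¹ ≤ (1.27:ℝ)⁻¹ := inv_anti₀ (by norm_num) hs3
    have hinv3p : (0:ℝ) < (s^3)⁻¹ := by positivity
    have hterm : -(n * (R/5) * (1.27:ℝ)⁻¹) ≤ p * (s^3)⁻¹ := by
      rcases abs_le.mp hxw with ⟨hL, hU⟩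
      nlinarith [mul_nonneg (mul_nonneg hnpos.le (by positivity : (0:ℝ) ≤ R/5))
        (sub_nonneg.mpr hinv3)]
    nlinarith [hxv2, hterm, hXN, hnpos, hR230, hc, hN0,
      mul_pos hnpos hRpos, mul_nonneg hnpos.le hN0]

set_option maxHeartbeats 1000000 in
theorem stmt_10 (r d : ℕ) (hr : 1 ≤ r) (hd : 1 ≤ d)
    (g : EuclideanSpace ℝ (Fin d) → ℝ) (hg : ContDiff ℝ 1 g)
    (hgrad : ∀ y : EuclideanSpace ℝ (Fin d),
      ‖gradient g y‖ ≤ 46 * Real.sqrt ((r : ℝ) + 1))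
    (x : EuclideanSpace ℝ (Fin d))
    (u : EuclideanSpace ℝ (Fin d)) (hu : ‖u‖ = 1)
    (h1 : |⟪u, rho (230 * Real.sqrt ((r : ℝ) + 1)) x⟫| < 1)
    (h2 : 1 / Real.sqrt 2 ≤
      |⟪u, gradient g (rho (230 * Real.sqrt ((r : ℝ) + 1)) x)⟫|) :
    0.08 ≤ ‖gradient (fun z : EuclideanSpace ℝ (Fin d) =>
      g (rho (230 * Real.sqrt ((r : ℝ) + 1)) z) + ‖z‖^2 / 5) x‖ := by
  have hsqrt_r : (1:ℝ) ≤ Real.sqrt ((r:ℝ)+1) := by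
    have h := Real.sqrt_le_sqrt (by nlinarith [Nat.cast_nonneg (α := ℝ) r] : (1:ℝ) ≤ (r:ℝ)+1)
    rwa [Real.sqrt_one] at h
  have hR230 : (230:ℝ) ≤ 230 * Real.sqrt ((r:ℝ)+1) := by nlinarith
  have hRpos : (0:ℝ) < 230 * Real.sqrt ((r:ℝ)+1) := by linarith
  have ht0 : (0:ℝ) < 1 + ‖x‖^2 / (230 * Real.sqrt ((r:ℝ)+1))^2 := by positivity
  have hspos : 0 < Real.sqrt (1 + ‖x‖^2 / (230 * Real.sqrt ((r:ℝ)+1))^2) :=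
    Real.sqrt_pos.mpr ht0
  have hsq : Real.sqrt (1 + ‖x‖^2 / (230 * Real.sqrt ((r:ℝ)+1))^2) ^ 2
      = 1 + ‖x‖^2 / (230 * Real.sqrt ((r:ℝ)+1))^2 := Real.sq_sqrt ht0.le
  have hux : |⟪u, x⟫| ≤ Real.sqrt (1 + ‖x‖^2 / (230 * Real.sqrt ((r:ℝ)+1))^2) := by
    simp only [rho] at h1
    rw [real_inner_smul_right, abs_mul,
      abs_of_pos (by positivity : (0:ℝ) < 1 / Real.sqrt (1 + ‖x‖^2 / (230 * Real.sqrt ((r:ℝ)+1))^2))] at h1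
    rw [one_div_mul_eq_div] at h1
    exact ((div_lt_one hspos).mp h1).le
  have hwnorm : ‖gradient g (rho (230 * Real.sqrt ((r:ℝ)+1)) x)‖
      ≤ (230 * Real.sqrt ((r:ℝ)+1)) / 5 := by
    calc ‖gradient g (rho (230 * Real.sqrt ((r:ℝ)+1)) x)‖
        ≤ 46 * Real.sqrt ((r:ℝ)+1) := hgrad _
      _ = (230 * Real.sqrt ((r:ℝ)+1)) / 5 := by ring
  rw [(rho_grad (230 * Real.sqrt ((r:ℝ)+1)) hRpos g hg x).gradient]
  exact main_ineq x u (gradient g (rho (230 * Real.sqrt ((r:ℝ)+1)) x))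
    (230 * Real.sqrt ((r:ℝ)+1)) (Real.sqrt (1 + ‖x‖^2 / (230 * Real.sqrt ((r:ℝ)+1))^2))
    hR230 hspos hsq hwnorm hu hux h2
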